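/- Let G be a finite directed graph on n = 3m vertices in which every vertex has indegree 2 and outdegree 2 (the underlying graph of any 2-2-XOR-BN). Then there exists a subset V_1 of the vertex set with |V_1| = m such that Γ⁺(x_i) ∩ Γ⁺(x_j) = ∅ for all distinct x_i, x_j ∈ V_1. -/

import Mathlib

/-- Greedy: if every vertex conflicts with at most 2 others, any set `S` contains an
independent subset of size at least `S.card / 3`. -/
theorem greedy_aux {n : ℕ} (A : Fin n → Finset (Fin n))
    (hdeg : ∀ i, (Finset.univ.filter fun j => j ≠ i ∧ (A i ∩ A j).Nonempty).card ≤ 2)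
    (S : Finset (Fin n)) :
    ∃ T ⊆ S, S.card / 3 ≤ T.card ∧
      ∀ i ∈ T, ∀ j ∈ T, i ≠ j → A i ∩ A j = ∅ := by
  induction S using Finset.strongInduction with
  | _ S ih =>
    rcases S.eq_empty_or_nonempty with rfl | ⟨v, hv⟩
    · exact ⟨∅, Finset.Subset.refl _, by simp, by simp⟩
    · set S' := (S.erase v).filter (fun j => A v ∩ A j = ∅) with hS'def
      have hS'sub : S' ⊆ S.erase v := Finset.filter_subset _ _
      have hssub : S' ⊆ S := hS'sub.trans (Finset.erase_subset _ _)
      have hss : S' ⊂ S := Finset.ssubset_of_subset_of_ssubset hS'sub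
        (Finset.erase_ssubset hv)
      obtain ⟨T, hTsub, hTcard, hTind⟩ := ih S' hss
      have hvT : v ∉ T := fun h => (Finset.mem_erase.1 (hS'sub (hTsub h))).1 rfl
      have hcard : S.card - 3 ≤ S'.card := by
        have hsplit : (S.erase v).card =
            S'.card + ((S.erase v).filter (fun j => ¬ (A v ∩ A j = ∅))).card := by
          rw [hS'def, Finset.card_filter_add_card_filter_not]
        have hbad : ((S.erase v).filter (fun j => ¬ (A v ∩ A j = ∅))).card ≤ 2 := by
          refine le_trans (Finset.card_le_card ?_) (hdeg v)
          intro j hj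
          simp only [Finset.mem_filter, Finset.mem_erase, Finset.mem_univ, true_and] at hj ⊢
          exact ⟨hj.1.1, Finset.nonempty_iff_ne_empty.2 hj.2⟩
        have herase : (S.erase v).card = S.card - 1 := Finset.card_erase_of_mem hv
        omega
      refine ⟨insert v T, ?_, ?_, ?_⟩
      · exact Finset.insert_subset hv (hTsub.trans hssub)
      · rw [Finset.card_insert_of_notMem hvT]
        omega
      · intro i hi j hj hij
        rcases Finset.mem_insert.1 hi with rfl | hi'
        · rcases Finset.mem_insert.1 hj with rfl | hj'
          · exact absurd rfl hij
          · exact (Finset.mem_filter.1 (hTsub hj')).2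
        · rcases Finset.mem_insert.1 hj with rfl | hj'
          · rw [Finset.inter_comm]
            exact (Finset.mem_filter.1 (hTsub hi')).2
          · exact hTind i hi' j hj' hij

theorem stmt2 (m : ℕ) (hm : 0 < m) (A : Fin (3 * m) → Finset (Fin (3 * m)))
    (hout : ∀ i, (A i).card = 2)
    (hin : ∀ i, (Finset.univ.filter fun j => i ∈ A j).card = 2) :
    ∃ V1 : Finset (Fin (3 * m)), V1.card = m ∧
      ∀ i ∈ V1, ∀ j ∈ V1, i ≠ j → A i ∩ A j = ∅ := by
  have hdeg : ∀ i, (Finset.univ.filter fun j => j ≠ i ∧ (A i ∩ A j).Nonempty).card ≤ 2 := by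
    intro i
    have hsub : (Finset.univ.filter fun j => j ≠ i ∧ (A i ∩ A j).Nonempty)
        ⊆ (A i).biUnion (fun k => Finset.univ.filter fun j => j ≠ i ∧ k ∈ A j) := by
      intro j hj
      simp only [Finset.mem_filter, Finset.mem_univ, true_and] at hj
      obtain ⟨hne, k, hk⟩ := hj
      simp only [Finset.mem_inter] at hk
      exact Finset.mem_biUnion.2 ⟨k, hk.1, by simp [hne, hk.2]⟩
    have hone : ∀ k ∈ A i, (Finset.univ.filter fun j => j ≠ i ∧ k ∈ A j).card ≤ 1 := by
      intro k hk
      have hsub2 : (Finset.univ.filter fun j => j ≠ i ∧ k ∈ A j)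
          ⊆ (Finset.univ.filter fun j => k ∈ A j).erase i := by
        intro j hj
        simp only [Finset.mem_filter, Finset.mem_univ, true_and, Finset.mem_erase] at hj ⊢
        exact ⟨hj.1, hj.2⟩
      have h2 := hin k
      have hmem : i ∈ Finset.univ.filter fun j => k ∈ A j := by simp [hk]
      have := Finset.card_erase_of_mem hmem
      calc _ ≤ _ := Finset.card_le_card hsub2
        _ ≤ 1 := by omega
    calc (Finset.univ.filter fun j => j ≠ i ∧ (A i ∩ A j).Nonempty).card
        ≤ _ := Finset.card_le_card hsub
      _ ≤ (A i).card * 1 := Finset.card_biUnion_le_card_mul _ _ 1 hone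
      _ = 2 := by rw [hout]
  obtain ⟨T, hTsub, hTcard, hTind⟩ := greedy_aux A hdeg Finset.univ
  have hcard : m ≤ T.card := by
    have : (Finset.univ : Finset (Fin (3 * m))).card = 3 * m := by simp
    rw [this] at hTcard
    omega
  obtain ⟨V1, hV1sub, hV1card⟩ := Finset.exists_subset_card_eq hcard
  exact ⟨V1, hV1card, fun i hi j hj hij => hTind i (hV1sub hi) j (hV1sub hj) hij⟩
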